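/- Let U be a unitary on H = (ℂ²)^{⊗n} with Uψ = φ for unit vectors ψ, φ. Then ‖U − I‖₂² ≥ 2(1 − |⟨ψ|φ⟩|) ≥ (1/2)‖|ψ⟩⟨ψ| − |φ⟩⟨φ|‖₂². Combined with d(I,U) ≥ 2^{-n/2}‖U−I‖₂, this gives 2^{(n+1)/2} d_C(ψ,φ) ≥ ‖|ψ⟩⟨ψ| − |φ⟩⟨φ|‖₂ for the complexity distance d_C(ψ,φ) = min{d(I,U) : Uψ = φ}. -/

import Mathlib

open scoped BigOperators ComplexOrder
open Matrix

noncomputable section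

abbrev QV (D : ℕ) := EuclideanSpace ℂ (Fin D)

def qproj {D : ℕ} (ψ : QV D) : Matrix (Fin D) (Fin D) ℂ :=
  Matrix.of fun i j => ψ i * (starRingEnd ℂ) (ψ j)

/-- A quantum transport plan between `ρ` and `σ`. -/
structure TPlan (D : ℕ) (ρ σ : Matrix (Fin D) (Fin D) ℂ) where
  n : ℕ
  q : Fin n → ℝ
  ψ : Fin n → QV D
  φ : Fin n → QV D
  q_pos : ∀ j, 0 < q j
  ψ_unit : ∀ j, ‖ψ j‖ = 1
  φ_unit : ∀ j, ‖φ j‖ = 1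
  margL : ∑ j, (q j : ℂ) • qproj (ψ j) = ρ
  margR : ∑ j, (q j : ℂ) • qproj (φ j) = σ

/-- p-th order transport cost of a plan (before the 1/p root). -/
def Tcost {D : ℕ} (d : QV D → QV D → ℝ) (p : ℝ) {ρ σ : Matrix (Fin D) (Fin D) ℂ}
    (Q : TPlan D ρ σ) : ℝ :=
  ∑ j, Q.q j * d (Q.ψ j) (Q.φ j) ^ p

/-- The order-p quantum Wasserstein distance. -/
def Wp {D : ℕ} (d : QV D → QV D → ℝ) (p : ℝ) (ρ σ : Matrix (Fin D) (Fin D) ℂ) : ℝ :=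
  sInf { x | ∃ Q : TPlan D ρ σ, x = (Tcost d p Q) ^ (1/p) }

/-- The infinite-order quantum Wasserstein distance. -/
def Winf {D : ℕ} (d : QV D → QV D → ℝ) (ρ σ : Matrix (Fin D) (Fin D) ℂ) : ℝ :=
  sInf { x | ∃ Q : TPlan D ρ σ, x = ⨆ j, d (Q.ψ j) (Q.φ j) }

def IsDensity {D : ℕ} (ρ : Matrix (Fin D) (Fin D) ℂ) : Prop :=
  ρ.PosSemidef ∧ ρ.trace = 1

/-- Hilbert–Schmidt (Frobenius) norm. -/
def frob {D : ℕ} (A : Matrix (Fin D) (Fin D) ℂ) : ℝ :=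
  Real.sqrt (∑ i, ∑ j, ‖A i j‖ ^ 2)

/-- Action of a matrix on a vector of the Euclidean space. -/
def act {D : ℕ} (U : Matrix (Fin D) (Fin D) ℂ) (ψ : QV D) : QV D :=
  (EuclideanSpace.equiv (Fin D) ℂ).symm (U.mulVec (EuclideanSpace.equiv (Fin D) ℂ ψ))

/-- Dual Lipschitz constant of an observable. -/
def Ld {D : ℕ} (d : QV D → QV D → ℝ) (O : Matrix (Fin D) (Fin D) ℂ) : ℝ :=
  sSup { x | ∃ ρ σ : Matrix (Fin D) (Fin D) ℂ, IsDensity ρ ∧ IsDensity σ ∧ ρ ≠ σ ∧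
    x = ((O * (ρ - σ)).trace).re / Wp d 1 ρ σ }

/-- Double-dual norm. -/
def DWnorm {D : ℕ} (d : QV D → QV D → ℝ) (X : Matrix (Fin D) (Fin D) ℂ) : ℝ :=
  sSup { x | ∃ O : Matrix (Fin D) (Fin D) ℂ, O.IsHermitian ∧ O.trace = 0 ∧ Ld d O ≤ 1 ∧
    x = ((O * X).trace).re }

/-- Trace (nuclear) norm. -/
def traceNorm {D : ℕ} (A : Matrix (Fin D) (Fin D) ℂ) : ℝ :=
  (((Matrix.posSemidef_conjTranspose_mul_self A).1.eigenvectorUnitary : Matrix (Fin D) (Fin D) ℂ) *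
    Matrix.diagonal (((↑) : ℝ → ℂ) ∘ Real.sqrt ∘ (Matrix.posSemidef_conjTranspose_mul_self A).1.eigenvalues) *
    (star ((Matrix.posSemidef_conjTranspose_mul_self A).1.eigenvectorUnitary) : Matrix (Fin D) (Fin D) ℂ)).trace.re


lemma sum_normSq' {D : ℕ} (ψ : QV D) (hψ : ‖ψ‖ = 1) :
    ∑ i, ‖ψ i‖ ^ 2 = 1 := by
  have h := EuclideanSpace.norm_eq ψ
  rw [hψ] at h
  have h2 : ∑ i, ‖ψ i‖ ^ 2 = 1 := Real.sqrt_eq_one.mp h.symm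
  simpa using h2

lemma frob_sq' {D : ℕ} (A : Matrix (Fin D) (Fin D) ℂ) :
    frob A ^ 2 = ∑ i, ∑ j, ‖A i j‖ ^ 2 := by
  rw [frob, Real.sq_sqrt]
  exact Finset.sum_nonneg fun i _ => Finset.sum_nonneg fun j _ => sq_nonneg _

lemma key_lemma' {D : ℕ} (ψ φ : QV D) (hψ : ‖ψ‖ = 1) (hφ : ‖φ‖ = 1)
    (W : Matrix (Fin D) (Fin D) ℂ) (h : act W ψ = φ) :
    2 * (1 - ‖inner (𝕜 := ℂ) ψ φ‖) ≤ frob (W - 1) ^ 2 := by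
  set A := W - 1 with hA
  have hv : ∀ i, A.mulVec ψ i = φ i - ψ i := by
    intro i
    have h1 : W.mulVec ψ i = φ i := by
      have := congrFun (congrArg (EuclideanSpace.equiv (Fin D) ℂ) h) i
      simp [act] at this; exact this
    simp [hA, Matrix.sub_mulVec, Matrix.one_mulVec, h1]
  have hCS : ∑ i, ‖A.mulVec ψ i‖ ^ 2 ≤ frob A ^ 2 := by
    rw [frob_sq']
    have hrow : ∀ i, ‖A.mulVec ψ i‖ ^ 2 ≤
        (∑ j, ‖A i j‖ ^ 2) * ∑ j, ‖ψ j‖ ^ 2 := by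
      intro i
      have h1 : ‖A.mulVec ψ i‖ ≤ ∑ j, ‖A i j‖ * ‖ψ j‖ := by
        rw [Matrix.mulVec, dotProduct]
        refine le_trans (norm_sum_le _ _) (le_of_eq ?_)
        exact Finset.sum_congr rfl fun j _ => norm_mul _ _
      calc ‖A.mulVec ψ i‖ ^ 2
          ≤ (∑ j, ‖A i j‖ * ‖ψ j‖) ^ 2 := by
            apply pow_le_pow_left₀ (norm_nonneg _) h1
        _ ≤ _ := Finset.sum_mul_sq_le_sq_mul_sq _ _ _
    calc ∑ i, ‖A.mulVec ψ i‖ ^ 2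
        ≤ ∑ i, (∑ j, ‖A i j‖ ^ 2) * ∑ j, ‖ψ j‖ ^ 2 :=
          Finset.sum_le_sum fun i _ => hrow i
      _ = _ := by rw [← Finset.sum_mul, sum_normSq' ψ hψ, mul_one]
  have hsum : ∑ i, ‖A.mulVec ψ i‖ ^ 2 = ‖φ - ψ‖ ^ 2 := by
    have hn := EuclideanSpace.norm_eq (φ - ψ)
    rw [hn, Real.sq_sqrt (Finset.sum_nonneg fun i _ => sq_nonneg _)]
    refine Finset.sum_congr rfl fun i _ => ?_
    rw [hv i]
    simp
  have hexp : ‖φ - ψ‖ ^ 2 = 2 - 2 * (inner (𝕜 := ℂ) ψ φ).re := by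
    rw [@norm_sub_sq ℂ, hψ, hφ, inner_re_symm]
    simp only [RCLike.re_to_complex]
    ring
  have hre : (inner (𝕜 := ℂ) ψ φ).re ≤ ‖inner (𝕜 := ℂ) ψ φ‖ :=
    Complex.re_le_norm _
  calc 2 * (1 - ‖inner (𝕜 := ℂ) ψ φ‖) ≤ 2 - 2 * (inner (𝕜 := ℂ) ψ φ).re := by
        linarith
    _ = ∑ i, ‖A.mulVec ψ i‖ ^ 2 := by rw [hsum, hexp]
    _ ≤ frob A ^ 2 := hCS

lemma frob_qproj_sub' {D : ℕ} (ψ φ : QV D) (hψ : ‖ψ‖ = 1) (hφ : ‖φ‖ = 1) :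
    frob (qproj ψ - qproj φ) ^ 2 = 2 - 2 * ‖inner (𝕜 := ℂ) ψ φ‖ ^ 2 := by
  rw [frob_sq']
  set c : ℂ := inner (𝕜 := ℂ) ψ φ with hc
  have hcsum : c = ∑ i, (starRingEnd ℂ) (ψ i) * φ i := by
    rw [hc]; simp [PiLp.inner_apply, RCLike.inner_apply]
    exact Finset.sum_congr rfl fun i _ => mul_comm _ _
  set z : Fin D → Fin D → ℂ := fun i j => (qproj ψ - qproj φ) i j with hz
  have hzdef : ∀ i j, z i j = ψ i * (starRingEnd ℂ) (ψ j) - φ i * (starRingEnd ℂ) (φ j) :=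
    fun i j => rfl
  have hψ1 : ∑ i, (ψ i * (starRingEnd ℂ) (ψ i)) = 1 := by
    have : ∀ i, ψ i * (starRingEnd ℂ) (ψ i) = ((‖ψ i‖ ^ 2 : ℝ) : ℂ) := by
      intro i; rw [Complex.mul_conj, Complex.sq_norm]
    simp_rw [this]
    rw [← Complex.ofReal_sum, sum_normSq' ψ hψ, Complex.ofReal_one]
  have hφ1 : ∑ i, (φ i * (starRingEnd ℂ) (φ i)) = 1 := by
    have : ∀ i, φ i * (starRingEnd ℂ) (φ i) = ((‖φ i‖ ^ 2 : ℝ) : ℂ) := by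
      intro i; rw [Complex.mul_conj, Complex.sq_norm]
    simp_rw [this]
    rw [← Complex.ofReal_sum, sum_normSq' φ hφ, Complex.ofReal_one]
  have hconjc : ∑ i, ψ i * (starRingEnd ℂ) (φ i) = (starRingEnd ℂ) c := by
    rw [hcsum, map_sum]
    exact Finset.sum_congr rfl fun i _ => by rw [_root_.map_mul, Complex.conj_conj]
  have hS : ∑ i, ∑ j, (z i j * (starRingEnd ℂ) (z i j)) =
      2 - (starRingEnd ℂ) c * c - c * (starRingEnd ℂ) c := by
    have expand : ∀ i j, z i j * (starRingEnd ℂ) (z i j) =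
        (ψ i * (starRingEnd ℂ) (ψ i)) * ((starRingEnd ℂ) (ψ j) * ψ j)
        - (ψ i * (starRingEnd ℂ) (φ i)) * ((starRingEnd ℂ) (ψ j) * φ j)
        - (φ i * (starRingEnd ℂ) (ψ i)) * ((starRingEnd ℂ) (φ j) * ψ j)
        + (φ i * (starRingEnd ℂ) (φ i)) * ((starRingEnd ℂ) (φ j) * φ j) := by
      intro i j
      rw [hzdef i j]
      simp only [map_sub, _root_.map_mul, Complex.conj_conj]
      ring
    simp_rw [expand, Finset.sum_add_distrib, Finset.sum_sub_distrib,
      ← Finset.mul_sum, ← Finset.sum_mul]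
    have e1 : ∑ j, (starRingEnd ℂ) (ψ j) * ψ j = 1 := by
      rw [← hψ1]; exact Finset.sum_congr rfl fun j _ => mul_comm _ _
    have e2 : ∑ j, (starRingEnd ℂ) (φ j) * φ j = 1 := by
      rw [← hφ1]; exact Finset.sum_congr rfl fun j _ => mul_comm _ _
    have e3 : ∑ j, (starRingEnd ℂ) (ψ j) * φ j = c := hcsum.symm
    have e4 : ∑ j, (starRingEnd ℂ) (φ j) * ψ j = (starRingEnd ℂ) c := by
      rw [← hconjc]; exact Finset.sum_congr rfl fun j _ => mul_comm _ _
    have e5 : ∑ i, φ i * (starRingEnd ℂ) (ψ i) = c := by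
      rw [hcsum]; exact Finset.sum_congr rfl fun i _ => mul_comm _ _
    rw [e1, e2, e3, e4, hψ1, hφ1, hconjc, e5]
    ring
  have hre : ∑ i, ∑ j, ‖z i j‖ ^ 2 =
      (∑ i, ∑ j, z i j * (starRingEnd ℂ) (z i j)).re := by
    rw [Complex.re_sum]
    refine Finset.sum_congr rfl fun i _ => ?_
    rw [Complex.re_sum]
    refine Finset.sum_congr rfl fun j _ => ?_
    rw [Complex.mul_conj, Complex.ofReal_re, Complex.sq_norm]
  calc ∑ i, ∑ j, ‖(qproj ψ - qproj φ) i j‖ ^ 2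
      = (∑ i, ∑ j, z i j * (starRingEnd ℂ) (z i j)).re := hre
    _ = ((2 : ℂ) - (starRingEnd ℂ) c * c - c * (starRingEnd ℂ) c).re := by rw [hS]
    _ = 2 - 2 * ‖c‖ ^ 2 := by
        have h1 : (starRingEnd ℂ) c * c = ((‖c‖ ^ 2 : ℝ) : ℂ) := by
          rw [mul_comm, Complex.mul_conj, Complex.sq_norm]
        have h2 : c * (starRingEnd ℂ) c = ((‖c‖ ^ 2 : ℝ) : ℂ) := by
          rw [Complex.mul_conj, Complex.sq_norm]
        rw [h1, h2, Complex.sub_re, Complex.sub_re, Complex.ofReal_re]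
        norm_num
        ring

/-- If `Uψ = φ` then `‖U−I‖₂² ≥ 2(1−|⟨ψ|φ⟩|) ≥ (1/2)‖|ψ⟩⟨ψ|−|φ⟩⟨φ|‖₂²`;
together with `d(I,U) ≥ 2^{-n/2}‖U−I‖₂` this yields
`2^{(n+1)/2}·d_C(ψ,φ) ≥ ‖|ψ⟩⟨ψ|−|φ⟩⟨φ|‖₂`. -/
theorem complexity_state_lower_bound (n : ℕ)
    (dI : Matrix (Fin (2 ^ n)) (Fin (2 ^ n)) ℂ → ℝ)
    (hdI : ∀ U ∈ Matrix.unitaryGroup (Fin (2 ^ n)) ℂ,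
        (2 : ℝ) ^ (-(n : ℝ) / 2) * frob (U - 1) ≤ dI U)
    (ψ φ : QV (2 ^ n)) (hψ : ‖ψ‖ = 1) (hφ : ‖φ‖ = 1)
    (U : Matrix (Fin (2 ^ n)) (Fin (2 ^ n)) ℂ)
    (hU : U ∈ Matrix.unitaryGroup (Fin (2 ^ n)) ℂ) (hUψ : act U ψ = φ) :
    2 * (1 - ‖inner (𝕜 := ℂ) ψ φ‖) ≤ frob (U - 1) ^ 2 ∧
    (1 / 2) * frob (qproj ψ - qproj φ) ^ 2 ≤
      2 * (1 - ‖inner (𝕜 := ℂ) ψ φ‖) ∧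
    frob (qproj ψ - qproj φ) ≤ (2 : ℝ) ^ (((n : ℝ) + 1) / 2) *
      sInf { x | ∃ W ∈ Matrix.unitaryGroup (Fin (2 ^ n)) ℂ, act W ψ = φ ∧ x = dI W } := by
  have h1 : 2 * (1 - ‖inner (𝕜 := ℂ) ψ φ‖) ≤ frob (U - 1) ^ 2 :=
    key_lemma' ψ φ hψ hφ U hUψ
  have hfq := frob_qproj_sub' ψ φ hψ hφ
  set a := ‖inner (𝕜 := ℂ) ψ φ‖ with ha
  have ha0 : 0 ≤ a := norm_nonneg _
  have ha1 : a ≤ 1 := by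
    have h := norm_inner_le_norm (𝕜 := ℂ) ψ φ
    rw [hψ, hφ] at h
    simpa [ha] using h
  have h2 : (1 / 2) * frob (qproj ψ - qproj φ) ^ 2 ≤ 2 * (1 - a) := by
    rw [hfq]; nlinarith [sq_nonneg (1 - a)]
  refine ⟨h1, h2, ?_⟩
  set F := frob (qproj ψ - qproj φ) with hF
  have hF0 : 0 ≤ F := Real.sqrt_nonneg _
  have hC : (0 : ℝ) < (2 : ℝ) ^ (((n : ℝ) + 1) / 2) := Real.rpow_pos_of_pos (by norm_num) _
  have hSne : ∃ x, x ∈ { x | ∃ W ∈ Matrix.unitaryGroup (Fin (2 ^ n)) ℂ, act W ψ = φ ∧ x = dI W } :=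
    ⟨dI U, U, hU, hUψ, rfl⟩
  have hlb : ∀ x ∈ { x | ∃ W ∈ Matrix.unitaryGroup (Fin (2 ^ n)) ℂ, act W ψ = φ ∧ x = dI W },
      F / (2 : ℝ) ^ (((n : ℝ) + 1) / 2) ≤ x := by
    rintro x ⟨W, hW, hWψ, rfl⟩
    have hk := key_lemma' ψ φ hψ hφ W hWψ
    rw [← ha] at hk
    have hfrobW : 0 ≤ frob (W - 1) := Real.sqrt_nonneg _
    have hF2 : F ^ 2 ≤ 2 * frob (W - 1) ^ 2 := by
      rw [hF, hfq]; nlinarith [sq_nonneg (1 - a)]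
    have hFle : F ≤ Real.sqrt 2 * frob (W - 1) := by
      have hs := Real.sqrt_le_sqrt hF2
      rwa [Real.sqrt_sq hF0, Real.sqrt_mul (by norm_num : (0:ℝ) ≤ 2),
        Real.sqrt_sq hfrobW] at hs
    have hdIW := hdI W hW
    have hp : (0 : ℝ) < (2 : ℝ) ^ ((n : ℝ) / 2) := Real.rpow_pos_of_pos (by norm_num) _
    have hfW : frob (W - 1) ≤ (2 : ℝ) ^ ((n : ℝ) / 2) * dI W := by
      have heq : frob (W - 1) =
          (2 : ℝ) ^ ((n : ℝ) / 2) * ((2 : ℝ) ^ (-(n : ℝ) / 2) * frob (W - 1)) := by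
        rw [← mul_assoc, ← Real.rpow_add (by norm_num : (0:ℝ) < 2)]
        have hz : (n : ℝ) / 2 + -(n : ℝ) / 2 = 0 := by ring
        rw [hz, Real.rpow_zero, one_mul]
      rw [heq]
      exact mul_le_mul_of_nonneg_left hdIW hp.le
    rw [div_le_iff₀ hC]
    calc F ≤ Real.sqrt 2 * frob (W - 1) := hFle
      _ ≤ Real.sqrt 2 * ((2 : ℝ) ^ ((n : ℝ) / 2) * dI W) :=
          mul_le_mul_of_nonneg_left hfW (Real.sqrt_nonneg 2)
      _ = dI W * (2 : ℝ) ^ (((n : ℝ) + 1) / 2) := by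
          rw [Real.sqrt_eq_rpow, ← mul_assoc,
            ← Real.rpow_add (by norm_num : (0:ℝ) < 2)]
          ring_nf
  have hinf := le_csInf hSne hlb
  rw [div_le_iff₀ hC] at hinf
  linarith [hinf]
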